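/- arXiv:1705.08393 — 2 statements merged into one kernel-verified Lean document; each statement's English description precedes it below -/
import Mathlib

section
/- If an RUV procedure is simultaneously an instance of RUV2 (estimating α̂ by regressing Y₃ on Ẑ₃, i.e., α̂ = (Ẑ₃^⊤Ẑ₃)^{-1}Ẑ₃^⊤Y₃, with Ẑ₂, Ẑ₃ depending only on (Y₂,𝒞, Y₃,𝒞)) and of RUV4 (estimating Ẑ₂ by generalized least squares Ẑ₂ = Y₂,𝒞 Σ̂_𝒞^{-1} α̂_𝒞^⊤(α̂_𝒞 Σ̂_𝒞^{-1} α̂_𝒞^⊤)^{-1}, with α̂, Ẑ₃, Σ̂ depending only on (Y₃,𝒞, Y₃,𝒞̄)), then the quantities Ẑ₃, α̂_𝒞, and Σ̂_𝒞 are functions of Y₃,𝒞 alone, and the procedure satisfies both the RUV3 regression identities; that is, the procedure is an instance of RUV3. -/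
open Matrix

/-- A procedure that is simultaneously an instance of RUV2 and of RUV4 is an instance
of RUV3: its factor-analysis quantities `Ẑ₃, α̂_𝒞, Σ̂_𝒞` depend on `Y₃,𝒞` alone, `Ẑ₂`
is given by the GLS formula on the controls, and `α̂_𝒞̄` by regression of `Y₃,𝒞̄` on `Ẑ₃`. -/
theorem ruv2_and_ruv4_implies_ruv3
    {k₂ r m s q : ℕ}
    -- the procedure: estimators as functions of (Y₂𝒞, Y₃𝒞, Y₃𝒞̄)
    (Z₂ : Matrix (Fin k₂) (Fin m) ℝ → Matrix (Fin r) (Fin m) ℝ →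
      Matrix (Fin r) (Fin s) ℝ → Matrix (Fin k₂) (Fin q) ℝ)
    (Z₃ : Matrix (Fin k₂) (Fin m) ℝ → Matrix (Fin r) (Fin m) ℝ →
      Matrix (Fin r) (Fin s) ℝ → Matrix (Fin r) (Fin q) ℝ)
    (αC : Matrix (Fin k₂) (Fin m) ℝ → Matrix (Fin r) (Fin m) ℝ →
      Matrix (Fin r) (Fin s) ℝ → Matrix (Fin q) (Fin m) ℝ)
    (αCbar : Matrix (Fin k₂) (Fin m) ℝ → Matrix (Fin r) (Fin m) ℝ →
      Matrix (Fin r) (Fin s) ℝ → Matrix (Fin q) (Fin s) ℝ)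
    (SigC : Matrix (Fin k₂) (Fin m) ℝ → Matrix (Fin r) (Fin m) ℝ →
      Matrix (Fin r) (Fin s) ℝ → (Fin m → ℝ))
    -- RUV2: factor-analysis quantities depend only on the control columns (Y₂𝒞, Y₃𝒞)
    (hruv2_Z2 : ∀ a b c c', Z₂ a b c = Z₂ a b c')
    (hruv2_Z3 : ∀ a b c c', Z₃ a b c = Z₃ a b c')
    (hruv2_αC : ∀ a b c c', αC a b c = αC a b c')
    (hruv2_SigC : ∀ a b c c', SigC a b c = SigC a b c')
    (hruv2_reg : ∀ a b c,
      αCbar a b c = ((Z₃ a b c)ᵀ * Z₃ a b c)⁻¹ * (Z₃ a b c)ᵀ * c)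
    -- RUV4: factor-analysis quantities depend only on the rotated rows (Y₃𝒞, Y₃𝒞̄)
    (hruv4_Z3 : ∀ a a' b c, Z₃ a b c = Z₃ a' b c)
    (hruv4_αC : ∀ a a' b c, αC a b c = αC a' b c)
    (hruv4_αCbar : ∀ a a' b c, αCbar a b c = αCbar a' b c)
    (hruv4_SigC : ∀ a a' b c, SigC a b c = SigC a' b c)
    (hruv4_gls : ∀ a b c,
      Z₂ a b c = a * (Matrix.diagonal (SigC a b c))⁻¹ * (αC a b c)ᵀ *
        (αC a b c * (Matrix.diagonal (SigC a b c))⁻¹ * (αC a b c)ᵀ)⁻¹) :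
    -- RUV3: Ẑ₃, α̂𝒞, Σ̂𝒞 are functions of Y₃𝒞 alone, and the two regression identities hold
    (∀ a a' b c c', Z₃ a b c = Z₃ a' b c') ∧
    (∀ a a' b c c', αC a b c = αC a' b c') ∧
    (∀ a a' b c c', SigC a b c = SigC a' b c') ∧
    (∀ a b c,
      Z₂ a b c = a * (Matrix.diagonal (SigC a b c))⁻¹ * (αC a b c)ᵀ *
        (αC a b c * (Matrix.diagonal (SigC a b c))⁻¹ * (αC a b c)ᵀ)⁻¹) ∧
    (∀ a b c,
      αCbar a b c = ((Z₃ a b c)ᵀ * Z₃ a b c)⁻¹ * (Z₃ a b c)ᵀ * c) := by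
  refine ⟨?_, ?_, ?_, hruv4_gls, hruv2_reg⟩
  · intro a a' b c c'
    rw [hruv2_Z3 a b c c', hruv4_Z3 a a' b c']
  · intro a a' b c c'
    rw [hruv2_αC a b c c', hruv4_αC a a' b c']
  · intro a a' b c c'
    rw [hruv2_SigC a b c c', hruv4_SigC a a' b c']
end

section
/- Importance-sampling consistency for location families: let y = h(θ) + e with h : ℝ^d → ℝ^d bijective and continuously differentiable with Jacobian determinant |J|, e having density f, and prior density g on θ absolutely continuous with respect to the distribution of h^{-1}(y − e). If e₁, e₂, … are i.i.d. copies of e, then for any bounded measurable u, the self-normalized estimator (Σ_{k≤K} u(h^{-1}(y−e_k)) g(h^{-1}(y−e_k))/|J(h^{-1}(y−e_k))|) / (Σ_{k≤K} g(h^{-1}(y−e_k))/|J(h^{-1}(y−e_k))|) converges in probability, as K → ∞, to the posterior expectation E[u(θ) | y] = ∫ u(z) g(z) f(y − h(z)) dz / ∫ g(z) f(y − h(z)) dz, provided the denominator integrals are finite and positive. -/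
open MeasureTheory Filter
open scoped NNReal ENNReal

/-- Importance-sampling consistency for location families: with `y = h(θ) + e`,
`h` a C¹ bijection with Jacobian determinant `J`, `e` having density `f`, prior
density `g` absolutely continuous w.r.t. the law of `h⁻¹(y − e)`, and i.i.d. copies
`e₁, e₂, …` of `e`, the self-normalized importance-sampling estimator of a bounded
measurable `u` converges in probability to the posterior expectation
`∫ u(z) g(z) f(y − h(z)) dz / ∫ g(z) f(y − h(z)) dz`. -/
theorem importance_sampling_consistency
    {d : ℕ} {Ω : Type*} [MeasurableSpace Ω] (P : Measure Ω) [IsProbabilityMeasure P]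
    (y : Fin d → ℝ)
    (h : (Fin d → ℝ) ≃ (Fin d → ℝ)) (hC1 : ContDiff ℝ 1 ⇑h)
    (J : (Fin d → ℝ) → ℝ)
    (hJ : ∀ z, J z = LinearMap.det ((fderiv ℝ (⇑h) z).toLinearMap))
    (hJne : ∀ z, J z ≠ 0)
    (f g u : (Fin d → ℝ) → ℝ)
    (hf_nonneg : ∀ x, 0 ≤ f x) (hf_meas : Measurable f) (hf_one : ∫ x, f x = 1)
    (hg_nonneg : ∀ x, 0 ≤ g x) (hg_meas : Measurable g)
    (hu_meas : Measurable u) (M : ℝ) (hu_bdd : ∀ x, |u x| ≤ M)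
    (e : ℕ → Ω → (Fin d → ℝ))
    (he_meas : ∀ k, Measurable (e k))
    (he_indep : ProbabilityTheory.iIndepFun e P)
    (he_law : ∀ k, Measure.map (e k) P
      = volume.withDensity (fun x => ENNReal.ofReal (f x)))
    (habs : volume.withDensity (fun x => ENNReal.ofReal (g x))
      ≪ Measure.map (fun x => h.symm (y - x))
          (volume.withDensity (fun x => ENNReal.ofReal (f x))))
    (hint_den : Integrable (fun z => g z * f (y - h z)) volume)
    (hpos_den : 0 < ∫ z, g z * f (y - h z))
    (hint_num : Integrable (fun z => u z * g z * f (y - h z)) volume)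
    (hmom_den : Integrable
      (fun x => g (h.symm (y - x)) / |J (h.symm (y - x))|)
      (volume.withDensity (fun x => ENNReal.ofReal (f x))))
    (hmom_num : Integrable
      (fun x => u (h.symm (y - x)) * g (h.symm (y - x)) / |J (h.symm (y - x))|)
      (volume.withDensity (fun x => ENNReal.ofReal (f x)))) :
    TendstoInMeasure P
      (fun K ω =>
        (∑ k ∈ Finset.range K,
            u (h.symm (y - e k ω)) * g (h.symm (y - e k ω)) / |J (h.symm (y - e k ω))|)
        / (∑ k ∈ Finset.range K,
            g (h.symm (y - e k ω)) / |J (h.symm (y - e k ω))|))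
      atTop
      (fun _ => (∫ z, u z * g z * f (y - h z)) / (∫ z, g z * f (y - h z))) := by
  classical
  have hcont : Continuous ⇑h := hC1.continuous
  have hemb : MeasurableEmbedding ⇑h := hcont.measurableEmbedding h.injective
  have hsymm_meas : Measurable ⇑h.symm := by
    intro s hs
    rw [← Equiv.image_eq_preimage_symm]
    exact hemb.measurableSet_image.2 hs
  have hJcont : Continuous J := by
    have hc : Continuous fun z => (fderiv ℝ ⇑h z).det :=
      ContinuousLinearMap.continuous_det.comp (hC1.continuous_fderiv one_ne_zero)
    convert hc using 1
    exact funext fun z => hJ z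
  have hJ_meas : Measurable J := hJcont.measurable
  have hT_meas : Measurable fun x : Fin d → ℝ => h.symm (y - x) :=
    hsymm_meas.comp (measurable_const.sub measurable_id)
  -- change of variables
  have change : ∀ q : (Fin d → ℝ) → ℝ, Measurable q →
      (∫ x, q (h.symm (y - x)) / |J (h.symm (y - x))|
        ∂(volume.withDensity (fun x => ENNReal.ofReal (f x))))
      = ∫ z, q z * f (y - h z) := by
    intro q hq
    have h1 : (∫ x, q (h.symm (y - x)) / |J (h.symm (y - x))|
        ∂(volume.withDensity (fun x => ENNReal.ofReal (f x))))
        = ∫ x, f x * (q (h.symm (y - x)) / |J (h.symm (y - x))|) := by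
      have hrw : (fun x => ENNReal.ofReal (f x))
          = fun x => ((Real.toNNReal (f x) : ℝ≥0) : ℝ≥0∞) := rfl
      rw [hrw, integral_withDensity_eq_integral_smul hf_meas.real_toNNReal]
      congr 1; funext x
      rw [NNReal.smul_def, Real.coe_toNNReal _ (hf_nonneg x), smul_eq_mul]
    have hder : ∀ z ∈ Set.univ, HasFDerivWithinAt (fun z => y - h z)
        ((fun z => -(fderiv ℝ ⇑h z)) z) Set.univ z := fun z _ =>
      (((hC1.differentiable one_ne_zero).differentiableAt.hasFDerivAt).const_sub y).hasFDerivWithinAt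
    have hinj : Set.InjOn (fun z => y - h z) Set.univ := by
      intro a _ b _ hab
      exact h.injective (sub_right_injective hab)
    have himg : (fun z => y - h z) '' Set.univ = Set.univ := by
      apply Set.eq_univ_of_forall
      intro x
      exact ⟨h.symm (y - x), trivial, by simp [sub_sub_cancel]⟩
    have hdet : ∀ z, |(-(fderiv ℝ ⇑h z)).det| = |J z| := by
      intro z
      have h0 : ((-(fderiv ℝ ⇑h z)) : (Fin d → ℝ) →ₗ[ℝ] (Fin d → ℝ))
          = (-1 : ℝ) • ((fderiv ℝ ⇑h z) : (Fin d → ℝ) →ₗ[ℝ] (Fin d → ℝ)) := by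
        ext x; simp
      have h1 : (-(fderiv ℝ ⇑h z)).det
          = (-1 : ℝ) ^ (Module.finrank ℝ (Fin d → ℝ)) * J z := by
        rw [hJ]
        show LinearMap.det ((-(fderiv ℝ ⇑h z)) : (Fin d → ℝ) →ₗ[ℝ] (Fin d → ℝ)) = _
        rw [h0, LinearMap.det_smul]
      rw [h1, abs_mul, abs_pow, abs_neg, abs_one, one_pow, one_mul]
    have h3 : ∀ z, |(-(fderiv ℝ ⇑h z)).det| •
        (f (y - h z) * (q (h.symm (y - (y - h z))) / |J (h.symm (y - (y - h z)))|))
        = q z * f (y - h z) := by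
      intro z
      have hz : y - (y - h z) = h z := sub_sub_cancel y (h z)
      rw [hz, Equiv.symm_apply_apply, hdet, smul_eq_mul]
      have hjz : |J z| ≠ 0 := abs_ne_zero.mpr (hJne z)
      field_simp
    rw [h1, ← setIntegral_univ, ← himg,
      integral_image_eq_integral_abs_det_fderiv_smul volume MeasurableSet.univ hder hinj
        (fun x => f x * (q (h.symm (y - x)) / |J (h.symm (y - x))|)),
      setIntegral_univ]
    exact integral_congr_ae (Filter.Eventually.of_forall h3)
  -- the importance weights
  set φn : (Fin d → ℝ) → ℝ :=
    fun x => u (h.symm (y - x)) * g (h.symm (y - x)) / |J (h.symm (y - x))| with hφn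
  set φd : (Fin d → ℝ) → ℝ :=
    fun x => g (h.symm (y - x)) / |J (h.symm (y - x))| with hφd
  have hφn_meas : Measurable φn :=
    ((hu_meas.comp hT_meas).mul (hg_meas.comp hT_meas)).div ((hJ_meas.comp hT_meas).abs)
  have hφd_meas : Measurable φd :=
    (hg_meas.comp hT_meas).div ((hJ_meas.comp hT_meas).abs)
  -- identical distribution
  have he_ident : ∀ i, ProbabilityTheory.IdentDistrib (e i) (e 0) P P := fun i =>
    ⟨(he_meas i).aemeasurable, (he_meas 0).aemeasurable, by rw [he_law i, he_law 0]⟩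
  have hident_n : ∀ i, ProbabilityTheory.IdentDistrib
      (fun ω => φn (e i ω)) (fun ω => φn (e 0 ω)) P P :=
    fun i => (he_ident i).comp hφn_meas
  have hident_d : ∀ i, ProbabilityTheory.IdentDistrib
      (fun ω => φd (e i ω)) (fun ω => φd (e 0 ω)) P P :=
    fun i => (he_ident i).comp hφd_meas
  -- independence
  have hindep_n : Pairwise (Function.onFun (ProbabilityTheory.IndepFun · · P) fun k ω => φn (e k ω)) :=
    fun i j hij => (he_indep.indepFun hij).comp hφn_meas hφn_meas
  have hindep_d : Pairwise (Function.onFun (ProbabilityTheory.IndepFun · · P) fun k ω => φd (e k ω)) :=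
    fun i j hij => (he_indep.indepFun hij).comp hφd_meas hφd_meas
  -- integrability
  have hint_n : Integrable (fun ω => φn (e 0 ω)) P := by
    have h0 : Integrable φn (Measure.map (e 0) P) := by rw [he_law 0]; exact hmom_num
    exact (integrable_map_measure hφn_meas.aestronglyMeasurable (he_meas 0).aemeasurable).1 h0
  have hint_d : Integrable (fun ω => φd (e 0 ω)) P := by
    have h0 : Integrable φd (Measure.map (e 0) P) := by rw [he_law 0]; exact hmom_den
    exact (integrable_map_measure hφd_meas.aestronglyMeasurable (he_meas 0).aemeasurable).1 h0
  -- means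
  have hmean_n : (∫ ω, φn (e 0 ω) ∂P) = ∫ z, u z * g z * f (y - h z) := by
    rw [← integral_map (he_meas 0).aemeasurable hφn_meas.aestronglyMeasurable, he_law 0]
    have := change (fun z => u z * g z) (hu_meas.mul hg_meas)
    simpa using this
  have hmean_d : (∫ ω, φd (e 0 ω) ∂P) = ∫ z, g z * f (y - h z) := by
    rw [← integral_map (he_meas 0).aemeasurable hφd_meas.aestronglyMeasurable, he_law 0]
    exact change g hg_meas
  -- strong law
  have hnum := ProbabilityTheory.strong_law_ae_real (fun k ω => φn (e k ω)) hint_n hindep_n hident_n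
  have hden := ProbabilityTheory.strong_law_ae_real (fun k ω => φd (e k ω)) hint_d hindep_d hident_d
  rw [hmean_n] at hnum
  rw [hmean_d] at hden
  -- conclude
  apply tendstoInMeasure_of_tendsto_ae
  · intro K
    apply Measurable.aestronglyMeasurable
    exact (Finset.measurable_sum _ (fun k _ => hφn_meas.comp (he_meas k))).div
      (Finset.measurable_sum _ (fun k _ => hφd_meas.comp (he_meas k)))
  · filter_upwards [hnum, hden] with ω h1 h2
    have hne : (∫ z, g z * f (y - h z)) ≠ 0 := ne_of_gt hpos_den
    have h3 := h1.div h2 hne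
    apply h3.congr'
    filter_upwards [eventually_ne_atTop 0] with K hK
    have hK' : (K : ℝ) ≠ 0 := Nat.cast_ne_zero.mpr hK
    exact div_div_div_cancel_right₀ hK' _ _
end
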